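/- Let Ψ : ℝ^{N-1} → ℝ be L-Lipschitz, U bounded harmonic on E_Ψ satisfying the vertical Hölder condition |U(x', x_N) − U(x', y_N)| ≤ C|x_N − y_N|^α with α ∈ (0,1), and suppose the mixed second derivative bound |∂²U/∂x_N∂ℓ (x)| ≤ M·dist(x, ∂E_Ψ)^{α−2} holds for a unit vector ℓ and all x ∈ E_Ψ. Then for all x ∈ E_Ψ and λ > 0, |∂U/∂ℓ(x + λe_N) − ∂U/∂ℓ(x)| ≤ (M/((1−α)(cos γ)^{2−α}))·(dist(x, ∂E_Ψ)^{α−1} − (dist(x, ∂E_Ψ) + λ)^{α−1}), where γ = arctan L. -/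

import Mathlib

open Metric Set MeasureTheory Filter

noncomputable section

/-- `Euc n` is Euclidean space `ℝ^n`. -/
abbrev Euc (n : ℕ) := EuclideanSpace ℝ (Fin n)

/-- A function is harmonic on a set if it is `C²` there and its Laplacian vanishes. -/
def HarmonicOnSet {m : ℕ} (f : Euc m → ℝ) (s : Set (Euc m)) : Prop :=
  ContDiffOn ℝ 2 f s ∧ ∀ x ∈ s,
    ∑ i : Fin m, fderiv ℝ (fun y => fderiv ℝ f y (EuclideanSpace.single i 1)) x
      (EuclideanSpace.single i 1) = 0

/-- The constant `K_N = 2 m_{N-1}(B^{N-1}) / m_N(B^N)` (here `N = n+1`). -/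
def Kconst (n : ℕ) : ℝ :=
  2 * (volume (ball (0 : Euc n) 1)).toReal / (volume (ball (0 : Euc (n+1)) 1)).toReal

/-- the projection of `ℝ^{n+1}` onto the first `n` coordinates -/
def proj {n : ℕ} (x : Euc (n+1)) : Euc n := WithLp.toLp 2 (fun (i : Fin n) => x i.castSucc)

/-- the last standard basis vector `e_N` in `ℝ^{n+1}` -/
def eN (n : ℕ) : Euc (n+1) := EuclideanSpace.single (Fin.last n) 1

/-- the strict epigraph of `Ψ : ℝ^n → ℝ` -/
def epigraph {n : ℕ} (Ψ : Euc n → ℝ) : Set (Euc (n+1)) :=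
  {x | Ψ (proj x) < x (Fin.last n)}

/-- the point obtained from `x` by replacing its last coordinate with `t` -/
def vmove {n : ℕ} (x : Euc (n+1)) (t : ℝ) : Euc (n+1) :=
  x + (t - x (Fin.last n)) • eN n

/-- the vertical Hölder condition of order `α` with constant `C` -/
def VertHolder {n : ℕ} (Ψ : Euc n → ℝ) (U : Euc (n+1) → ℝ) (C α : ℝ) : Prop :=
  ∀ x ∈ epigraph Ψ, ∀ t : ℝ, Ψ (proj x) < t →
    |U x - U (vmove x t)| ≤ C * |x (Fin.last n) - t| ^ α


open Topology

variable {n : ℕ}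

lemma eN_apply_castSucc (i : Fin n) : eN n i.castSucc = 0 := by
  simp [eN, EuclideanSpace.single_apply, Fin.ne_last_of_lt (Fin.castSucc_lt_last i)]

lemma eN_apply_last : eN n (Fin.last n) = 1 := by
  simp [eN, EuclideanSpace.single_apply]

lemma proj_add_smul_eN (x : Euc (n+1)) (t : ℝ) : proj (x + t • eN n) = proj x := by
  ext i
  simp [proj, PiLp.add_apply, PiLp.smul_apply, eN_apply_castSucc]

lemma last_add_smul_eN (x : Euc (n+1)) (t : ℝ) :
    (x + t • eN n) (Fin.last n) = x (Fin.last n) + t := by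
  simp [PiLp.add_apply, PiLp.smul_apply, eN_apply_last]

lemma isOpen_epigraph {Ψ : Euc n → ℝ} (hc : Continuous Ψ) : IsOpen (epigraph Ψ) := by
  have h1 : Continuous fun x : Euc (n+1) => x (Fin.last n) := by fun_prop
  have h2 : Continuous (proj (n := n)) := by
    unfold proj; exact (PiLp.continuous_toLp 2 _).comp (by fun_prop)
  exact isOpen_lt (hc.comp h2) h1

lemma frontier_subset_graph {Ψ : Euc n → ℝ} (hc : Continuous Ψ) :
    frontier (epigraph Ψ) ⊆ {w | w (Fin.last n) = Ψ (proj w)} := by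
  intro w hw
  have h2 : Continuous (proj (n := n)) := by unfold proj; exact (PiLp.continuous_toLp 2 _).comp (by fun_prop)
  have hcl : closure (epigraph Ψ) ⊆ {w : Euc (n+1) | Ψ (proj w) ≤ w (Fin.last n)} := by
    apply closure_minimal
    · intro z hz
      show Ψ (proj z) ≤ z (Fin.last n)
      exact le_of_lt hz
    · exact isClosed_le (hc.comp h2) (by fun_prop)
  have h1 : Ψ (proj w) ≤ w (Fin.last n) := hcl hw.1
  have h3 : w ∉ epigraph Ψ := by
    intro hmem
    have h5 := hw.2
    rw [(isOpen_epigraph hc).interior_eq] at h5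
    exact h5 hmem
  have h4 : ¬ Ψ (proj w) < w (Fin.last n) := h3
  exact le_antisymm (not_lt.1 h4) h1

lemma graphpt_mem_frontier {Ψ : Euc n → ℝ} (hc : Continuous Ψ) (x : Euc (n+1))
    (hx : x ∈ epigraph Ψ) :
    x + (Ψ (proj x) - x (Fin.last n)) • eN n ∈ frontier (epigraph Ψ) := by
  set w := x + (Ψ (proj x) - x (Fin.last n)) • eN n with hw
  have hpw : proj w = proj x := proj_add_smul_eN _ _
  have hlw : w (Fin.last n) = Ψ (proj x) := by
    rw [hw, last_add_smul_eN]; ring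
  constructor
  · -- closure
    apply mem_closure_of_tendsto (f := fun t : ℝ => w + t • eN n) (b := 𝓝[>] (0:ℝ))
    · have : Tendsto (fun t : ℝ => w + t • eN n) (𝓝 0) (𝓝 (w + (0:ℝ) • eN n)) := by
        apply Tendsto.add tendsto_const_nhds
        exact (tendsto_id.smul_const _)
      simpa using this.mono_left nhdsWithin_le_nhds
    · filter_upwards [self_mem_nhdsWithin] with t ht
      show Ψ (proj (w + t • eN n)) < (w + t • eN n) (Fin.last n)
      rw [proj_add_smul_eN, last_add_smul_eN, hpw, hlw]
      linarith [mem_Ioi.1 ht]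
  · rw [(isOpen_epigraph hc).interior_eq]
    intro hmem
    have : Ψ (proj w) < w (Fin.last n) := hmem
    rw [hpw, hlw] at this; exact lt_irrefl _ this

lemma dist_sq_split (z w : Euc (n+1)) :
    dist z w ^ 2 = ‖proj z - proj w‖ ^ 2 + (z (Fin.last n) - w (Fin.last n)) ^ 2 := by
  have h1 : dist z w ^ 2 = ∑ i : Fin (n+1), (z i - w i)^2 := by
    rw [EuclideanSpace.dist_eq, Real.sq_sqrt (by positivity)]
    simp [Real.dist_eq, sq_abs]
  have h2 : ‖proj z - proj w‖ ^ 2 = ∑ i : Fin n, (z i.castSucc - w i.castSucc)^2 := by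
    rw [EuclideanSpace.norm_eq, Real.sq_sqrt (by positivity)]
    simp [proj, PiLp.sub_apply, Real.norm_eq_abs, sq_abs]
  rw [h1, h2, Fin.sum_univ_castSucc]

lemma cos_h_le_dist {L : ℝ} (hL : 0 ≤ L) {Ψ : Euc n → ℝ}
    (hΨ : ∀ x y, |Ψ x - Ψ y| ≤ L * ‖x - y‖)
    (z : Euc (n+1)) (hz : z ∈ epigraph Ψ) (w : Euc (n+1))
    (hwfr : w ∈ frontier (epigraph Ψ)) :
    Real.cos (Real.arctan L) * (z (Fin.last n) - Ψ (proj z)) ≤ dist z w := by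
  have hc : Continuous Ψ := by
    apply (LipschitzWith.of_dist_le_mul (K := L.toNNReal) (f := Ψ) ?_).continuous
    intro a b
    rw [Real.coe_toNNReal _ hL, Real.dist_eq, dist_eq_norm]
    exact hΨ a b
  have hwN : w (Fin.last n) = Ψ (proj w) := frontier_subset_graph hc hwfr
  set a := ‖proj z - proj w‖ with ha
  set h := z (Fin.last n) - Ψ (proj z) with hh
  set b := z (Fin.last n) - w (Fin.last n) with hb
  clear_value a h b
  have ha0 : 0 ≤ a := by rw [ha]; exact norm_nonneg _
  have hh0 : 0 < h := by rw [hh]; exact sub_pos.2 hz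
  have hbge : h - L * a ≤ b := by
    have h1 : Ψ (proj w) - Ψ (proj z) ≤ L * ‖proj z - proj w‖ := by
      have := (abs_le.1 (hΨ (proj w) (proj z))).2
      rwa [norm_sub_rev] at this
    rw [hb, hwN, hh, ha]; linarith
  have hsq : dist z w ^ 2 = a ^ 2 + b ^ 2 := by rw [ha, hb]; exact dist_sq_split z w
  have hLsq : (0:ℝ) < 1 + L ^ 2 := by positivity
  have hcos : Real.cos (Real.arctan L) = 1 / Real.sqrt (1 + L ^ 2) := Real.cos_arctan L
  have hsqrtpos : 0 < Real.sqrt (1 + L ^ 2) := Real.sqrt_pos.2 hLsq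
  have hlhs0 : 0 ≤ Real.cos (Real.arctan L) * h := by
    apply mul_nonneg _ hh0.le
    rw [hcos]; positivity
  have key : h ^ 2 ≤ (a ^ 2 + b ^ 2) * (1 + L ^ 2) := by
    rcases le_or_gt (h - L * a) 0 with hcase | hcase
    · have hLa : h ≤ L * a := by linarith
      nlinarith [mul_self_le_mul_self hh0.le hLa, sq_nonneg b, sq_nonneg a, sq_nonneg (L*a)]
    · have hb2 : (h - L * a) ^ 2 ≤ b ^ 2 := by
        nlinarith [hbge, hcase]
      nlinarith [sq_nonneg ((1 + L^2) * a - L * h)]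
  have hsq2 : (Real.cos (Real.arctan L) * h) ^ 2 ≤ dist z w ^ 2 := by
    rw [hsq, hcos, mul_pow, div_pow, one_pow, Real.sq_sqrt hLsq.le,
      div_mul_eq_mul_div, mul_comm]
    rw [div_le_iff₀ hLsq]
    linarith [key]
  exact (pow_le_pow_iff_left₀ hlhs0 dist_nonneg two_ne_zero).1 hsq2

lemma continuous_of_lip {L : ℝ} (hL : 0 ≤ L) {Ψ : Euc n → ℝ}
    (hΨ : ∀ x y, |Ψ x - Ψ y| ≤ L * ‖x - y‖) : Continuous Ψ := by
  apply (LipschitzWith.of_dist_le_mul (K := L.toNNReal) (f := Ψ) ?_).continuous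
  intro a b
  rw [Real.coe_toNNReal _ hL, Real.dist_eq, dist_eq_norm]
  exact hΨ a b

lemma infDist_lower {L : ℝ} (hL : 0 ≤ L) {Ψ : Euc n → ℝ}
    (hΨ : ∀ x y, |Ψ x - Ψ y| ≤ L * ‖x - y‖)
    (z : Euc (n+1)) (hz : z ∈ epigraph Ψ) :
    Real.cos (Real.arctan L) * (z (Fin.last n) - Ψ (proj z)) ≤
      infDist z (frontier (epigraph Ψ)) := by
  have hc := continuous_of_lip hL hΨ
  have hne : (frontier (epigraph Ψ)).Nonempty :=
    ⟨_, graphpt_mem_frontier hc z hz⟩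
  by_contra hcon
  push_neg at hcon
  obtain ⟨w, hw, hlt⟩ := (infDist_lt_iff hne).1 hcon
  exact absurd hlt (not_lt.2 (cos_h_le_dist hL hΨ z hz w hw))

lemma infDist_upper {L : ℝ} (hL : 0 ≤ L) {Ψ : Euc n → ℝ}
    (hΨ : ∀ x y, |Ψ x - Ψ y| ≤ L * ‖x - y‖)
    (z : Euc (n+1)) (hz : z ∈ epigraph Ψ) :
    infDist z (frontier (epigraph Ψ)) ≤ z (Fin.last n) - Ψ (proj z) := by
  have hc := continuous_of_lip hL hΨ
  have := infDist_le_dist_of_mem (x := z) (graphpt_mem_frontier hc z hz)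
  refine le_trans this (le_of_eq ?_)
  rw [dist_self_add_right, norm_smul]
  have : ‖eN n‖ = 1 := by
    rw [eN, EuclideanSpace.norm_single]; norm_num
  rw [this, mul_one, Real.norm_eq_abs,
    abs_of_nonpos (sub_nonpos.2 (le_of_lt (hz : Ψ (proj z) < z (Fin.last n))))]
  ring

lemma infDist_pos {L : ℝ} (hL : 0 ≤ L) {Ψ : Euc n → ℝ}
    (hΨ : ∀ x y, |Ψ x - Ψ y| ≤ L * ‖x - y‖)
    (z : Euc (n+1)) (hz : z ∈ epigraph Ψ) :
    0 < infDist z (frontier (epigraph Ψ)) := by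
  have h1 := infDist_lower hL hΨ z hz
  have hcospos : 0 < Real.cos (Real.arctan L) := by
    rw [Real.cos_arctan]; positivity
  have hh0 : 0 < z (Fin.last n) - Ψ (proj z) := sub_pos.2 hz
  nlinarith

/-- moving up increases the distance at least proportionally -/
lemma infDist_shift {L : ℝ} (hL : 0 ≤ L) {Ψ : Euc n → ℝ}
    (hΨ : ∀ x y, |Ψ x - Ψ y| ≤ L * ‖x - y‖)
    (x : Euc (n+1)) (hx : x ∈ epigraph Ψ) (t : ℝ) (ht : 0 ≤ t) :
    Real.cos (Real.arctan L) * (infDist x (frontier (epigraph Ψ)) + t) ≤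
      infDist (x + t • eN n) (frontier (epigraph Ψ)) := by
  have hxt : x + t • eN n ∈ epigraph Ψ := by
    show Ψ (proj (x + t • eN n)) < (x + t • eN n) (Fin.last n)
    rw [proj_add_smul_eN, last_add_smul_eN]
    have : Ψ (proj x) < x (Fin.last n) := hx
    linarith
  have h1 := infDist_lower hL hΨ (x + t • eN n) hxt
  rw [proj_add_smul_eN, last_add_smul_eN] at h1
  have h2 := infDist_upper hL hΨ x hx
  have hcospos : 0 < Real.cos (Real.arctan L) := by
    rw [Real.cos_arctan]; positivity
  calc Real.cos (Real.arctan L) * (infDist x (frontier (epigraph Ψ)) + t)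
      ≤ Real.cos (Real.arctan L) * (x (Fin.last n) - Ψ (proj x) + t) := by
        apply mul_le_mul_of_nonneg_left _ hcospos.le
        linarith
    _ = Real.cos (Real.arctan L) * (x (Fin.last n) + t - Ψ (proj x)) := by ring
    _ ≤ _ := h1


/-- Integrating the mixed second derivative bound along a vertical segment. -/
theorem stmt9 {n : ℕ} (L C M α : ℝ) (hL : 0 ≤ L) (hα : α ∈ Ioo (0:ℝ) 1)
    (Ψ : Euc n → ℝ) (hΨ : ∀ x y, |Ψ x - Ψ y| ≤ L * ‖x - y‖)
    (U : Euc (n+1) → ℝ) (hharm : HarmonicOnSet U (epigraph Ψ))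
    (hbdd : BddAbove ((fun y => |U y|) '' epigraph Ψ))
    (hvert : VertHolder Ψ U C α)
    (l : Euc (n+1)) (hl : ‖l‖ = 1)
    (hmix : ∀ x ∈ epigraph Ψ,
      |fderiv ℝ (fun y => fderiv ℝ U y l) x (eN n)| ≤
        M * infDist x (frontier (epigraph Ψ)) ^ (α - 2)) :
    ∀ x ∈ epigraph Ψ, ∀ lam : ℝ, 0 < lam →
      |fderiv ℝ U (x + lam • eN n) l - fderiv ℝ U x l| ≤
        (M / ((1 - α) * Real.cos (Real.arctan L) ^ (2 - α))) *
          (infDist x (frontier (epigraph Ψ)) ^ (α - 1) -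
            (infDist x (frontier (epigraph Ψ)) + lam) ^ (α - 1)) := by
  have hharm1 : ContDiffOn ℝ 2 U (epigraph Ψ) := hharm.1
  intro x hx lam hlam
  obtain ⟨hα0, hα1⟩ := hα
  have hc := continuous_of_lip hL hΨ
  have hopen := isOpen_epigraph hc
  set F := frontier (epigraph Ψ) with hF
  set d := infDist x F with hd
  have hd0 : 0 < d := infDist_pos hL hΨ x hx
  set cγ := Real.cos (Real.arctan L) with hcγ
  have hcos : 0 < cγ := by rw [hcγ, Real.cos_arctan]; positivity
  set K := M * cγ ^ (α - 2) with hK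
  have hM : 0 ≤ M := by
    by_contra hMneg
    push_neg at hMneg
    have h1 := hmix x hx
    have h2 : M * infDist x F ^ (α - 2) < 0 :=
      mul_neg_of_neg_of_pos hMneg (Real.rpow_pos_of_pos hd0 _)
    exact absurd (le_trans (abs_nonneg _) h1) (not_le.2 h2)
  -- the curve and membership
  set c : ℝ → Euc (n+1) := fun t => x + t • eN n with hcdef
  have hmem : ∀ t : ℝ, 0 ≤ t → c t ∈ epigraph Ψ := by
    intro t ht
    show Ψ (proj (x + t • eN n)) < (x + t • eN n) (Fin.last n)
    rw [proj_add_smul_eN, last_add_smul_eN]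
    have : Ψ (proj x) < x (Fin.last n) := hx
    linarith
  -- G and its differentiability
  set G : Euc (n+1) → ℝ := fun y => fderiv ℝ U y l with hGdef
  have hGdiff : ∀ z ∈ epigraph Ψ, HasFDerivAt G (fderiv ℝ G z) z := by
    intro z hz
    have h2 : ContDiffAt ℝ 2 U z := hharm1.contDiffAt (hopen.mem_nhds hz)
    have h3 : ContDiffAt ℝ 1 (fderiv ℝ U) z := h2.fderiv_right (by norm_num)
    have h4 : ContDiffAt ℝ 1 G z := h3.clm_apply contDiffAt_const
    exact (h4.differentiableAt one_ne_zero).hasFDerivAt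
  have hcurve : ∀ t : ℝ, HasDerivAt c (eN n) t := by
    intro t
    have h1 : HasDerivAt (fun s : ℝ => s • eN n) ((1:ℝ) • eN n) t :=
      (hasDerivAt_id t).smul_const (eN n)
    have h2 := h1.const_add x
    rw [one_smul] at h2; exact h2
  have hg' : ∀ t : ℝ, 0 ≤ t → HasDerivAt (fun s => G (c s))
      (fderiv ℝ G (c t) (eN n)) t := by
    intro t ht
    exact (hGdiff (c t) (hmem t ht)).comp_hasDerivAt t (hcurve t)
  -- bound on the derivative
  have hbound : ∀ t ∈ Set.Ico (0:ℝ) lam,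
      ‖fderiv ℝ G (c t) (eN n)‖ ≤ K * (d + t) ^ (α - 2) := by
    intro t ht
    have h1 := hmix (c t) (hmem t ht.1)
    have hdpos : 0 < cγ * (d + t) := mul_pos hcos (by linarith [ht.1])
    have h2 : cγ * (d + t) ≤ infDist (c t) F := infDist_shift hL hΨ x hx t ht.1
    have h3 : infDist (c t) F ^ (α - 2) ≤ (cγ * (d + t)) ^ (α - 2) :=
      Real.rpow_le_rpow_of_nonpos hdpos h2 (by linarith)
    have h4 : (cγ * (d + t)) ^ (α - 2) = cγ ^ (α - 2) * (d + t) ^ (α - 2) :=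
      Real.mul_rpow hcos.le (by linarith [ht.1])
    rw [Real.norm_eq_abs]
    calc |fderiv ℝ G (c t) (eN n)| ≤ M * infDist (c t) F ^ (α - 2) := h1
      _ ≤ M * (cγ ^ (α - 2) * (d + t) ^ (α - 2)) := by
          rw [← h4]; exact mul_le_mul_of_nonneg_left h3 hM
      _ = K * (d + t) ^ (α - 2) := by rw [hK]; ring
  -- the barrier function
  set B : ℝ → ℝ := fun t => (K / (1 - α)) * (d ^ (α - 1) - (d + t) ^ (α - 1)) with hBdef
  have hB' : ∀ t : ℝ, 0 ≤ t → HasDerivAt B (K * (d + t) ^ (α - 2)) t := by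
    intro t ht
    have hdt : (0:ℝ) < d + t := by linarith
    have h1 : HasDerivAt (fun s : ℝ => d + s) 1 t := (hasDerivAt_id t).const_add d
    have h2 : HasDerivAt (fun s : ℝ => (d + s) ^ (α - 1))
        ((α - 1) * (d + t) ^ (α - 1 - 1) * 1) t :=
      (Real.hasDerivAt_rpow_const (Or.inl hdt.ne')).comp t h1
    have h3 := (h2.const_sub (d ^ (α - 1))).const_mul (K / (1 - α))
    refine h3.congr_deriv ?_
    have h5 : α - 1 - 1 = α - 2 := by ring
    have h1α : (1:ℝ) - α ≠ 0 := by linarith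
    rw [h5]
    field_simp
    ring
  -- apply the fencing theorem
  have happly := image_norm_le_of_norm_deriv_right_le_deriv_boundary'
    (f := fun t => G (c t) - G (c 0)) (f' := fun t => fderiv ℝ G (c t) (eN n))
    (a := 0) (b := lam)
    (fun t ht => (((hg' t ht.1).sub_const (G (c 0))).continuousAt).continuousWithinAt)
    (fun t ht => ((hg' t ht.1).sub_const (G (c 0))).hasDerivWithinAt)
    (B := B) (B' := fun t => K * (d + t) ^ (α - 2))
    (by simp [hBdef])
    (fun t ht => ((hB' t ht.1).continuousAt).continuousWithinAt)
    (fun t ht => (hB' t ht.1).hasDerivWithinAt)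
    hbound
  have hfin := happly (Set.mem_Icc.2 ⟨hlam.le, le_rfl⟩)
  have hKeq : K / (1 - α) = M / ((1 - α) * cγ ^ (2 - α)) := by
    have hinv : cγ ^ (α - 2) = (cγ ^ (2 - α))⁻¹ := by
      rw [← Real.rpow_neg hcos.le]; congr 1; ring
    have hne : cγ ^ (2 - α) ≠ 0 := ne_of_gt (Real.rpow_pos_of_pos hcos _)
    have h1α : (1:ℝ) - α ≠ 0 := by linarith
    rw [hK, hinv]
    field_simp
  have hc0 : c 0 = x := by simp [hcdef]
  have hG0 : G (c 0) = fderiv ℝ U x l := by rw [hc0]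
  have hGl : G (c lam) = fderiv ℝ U (x + lam • eN n) l := rfl
  calc |fderiv ℝ U (x + lam • eN n) l - fderiv ℝ U x l|
      = ‖G (c lam) - G (c 0)‖ := by rw [hG0, hGl, Real.norm_eq_abs]
    _ ≤ B lam := hfin
    _ = (M / ((1 - α) * cγ ^ (2 - α))) * (d ^ (α - 1) - (d + lam) ^ (α - 1)) := by
        rw [hBdef]; rw [hKeq]
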